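/- Under the longitudinal difference-in-differences assumptions, the intervention-specific mean is identified by the iterated-regression functional ψ_t. Precisely: fix an integer t ≥ 1 and adopt the core setup with horizon t (events B₀ ⊇ ⋯ ⊇ B_t, σ-algebras 𝒲₁ ⊆ ⋯ ⊆ 𝒲_t, positivity p_m ≥ ε a.s.). Let Y₀, Y₁, …, Y_t and Y₀*, Y₁*, …, Y_t* be integrable random variables such that for every s ∈ {0,…,t}, Y_s* = Y_s a.s. on the event B_s (treatment-consistency/no-anticipation; since P(B₀)=1 this gives Y₀* = Y₀ a.s.). Assume parallel trends: for every pair 1 ≤ m ≤ k ≤ t there exists a 𝒲_m-measurable random variable h_{k,m} that is simultaneously a version of the conditional expectation of Y_k* − Y_{k−1}* given 𝒲_m under P(·|B_{m−1}) and a version of the conditional expectation of Y_k* − Y_{k−1}* given 𝒲_m under P(·|B_m). Then E_P[Y_t*] = E_P[Y₀] + Σ_{k=1}^t (φ_{k,k} − φ_{k−1,k}) =: ψ_t, where φ_{j,k} is built from the observed outcome Y_j by the iterated conditional-expectation recursion, and this value does not depend on the versions of conditional expectations chosen. -/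

import Mathlib

open MeasureTheory ProbabilityTheory

open scoped ENNReal

section Aux

variable {Ω : Type*} {m : MeasurableSpace Ω} [inst : MeasurableSpace Ω] {μ : Measure Ω}
  [IsFiniteMeasure μ] {C : Set Ω} {ε : ℝ} {p : Ω → ℝ}

lemma did_aux_meas_le (hm : m ≤ inst) (hC : MeasurableSet[inst] C) (hε : 0 < ε)
    (hp : p =ᵐ[μ] μ[C.indicator (fun _ => (1:ℝ))|m])
    (hpε : ∀ᵐ ω ∂μ, ε ≤ p ω)
    {S : Set Ω} (hS : MeasurableSet[m] S) :
    μ S ≤ ENNReal.ofReal ε⁻¹ * μ (S ∩ C) := by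
  have hCind : Integrable (C.indicator fun _ => (1:ℝ)) μ := (integrable_const 1).indicator hC
  have hpint : Integrable p μ := integrable_condExp.congr hp.symm
  have h1 : ε * (μ S).toReal ≤ (μ (S ∩ C)).toReal := by
    have hple : ∫ ω in S, ε ∂μ ≤ ∫ ω in S, p ω ∂μ :=
      setIntegral_mono_ae (integrableOn_const (measure_ne_top μ S))
        hpint.integrableOn hpε
    have h2 : ∫ ω in S, p ω ∂μ = (μ (S ∩ C)).toReal := by
      calc ∫ ω in S, p ω ∂μ
          = ∫ ω in S, (μ[C.indicator (fun _ => (1:ℝ))|m]) ω ∂μ :=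
            integral_congr_ae (ae_restrict_of_ae hp)
        _ = ∫ ω in S, C.indicator (fun _ => (1:ℝ)) ω ∂μ := setIntegral_condExp hm hCind hS
        _ = (μ (S ∩ C)).toReal := by
            rw [setIntegral_indicator hC, setIntegral_const, smul_eq_mul, mul_one]; rfl
    have h3 : ∫ ω in S, ε ∂μ = ε * (μ S).toReal := by
      rw [setIntegral_const, smul_eq_mul, mul_comm]; rfl
    linarith
  have hSfin := measure_ne_top μ S
  have hfin2 := measure_ne_top μ (S ∩ C)
  rw [← ENNReal.ofReal_toReal hSfin, ← ENNReal.ofReal_toReal hfin2,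
    ← ENNReal.ofReal_mul (by positivity : (0:ℝ) ≤ ε⁻¹)]
  apply ENNReal.ofReal_le_ofReal
  calc (μ S).toReal = ε⁻¹ * (ε * (μ S).toReal) := by field_simp
    _ ≤ ε⁻¹ * (μ (S ∩ C)).toReal := mul_le_mul_of_nonneg_left h1 (by positivity)

lemma did_aux_trim_le (hm : m ≤ inst) (hC : MeasurableSet[inst] C) (hε : 0 < ε)
    (hp : p =ᵐ[μ] μ[C.indicator (fun _ => (1:ℝ))|m])
    (hpε : ∀ᵐ ω ∂μ, ε ≤ p ω) :
    μ.trim hm ≤ ENNReal.ofReal ε⁻¹ • ((μ.restrict C).trim hm) := by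
  refine Measure.le_intro fun s hs _ => ?_
  rw [trim_measurableSet_eq hm hs, Measure.smul_apply, trim_measurableSet_eq hm hs,
    Measure.restrict_apply (hm _ hs), smul_eq_mul]
  exact did_aux_meas_le hm hC hε hp hpε hs

lemma did_aux_null (hm : m ≤ inst) (hC : MeasurableSet[inst] C) (hε : 0 < ε)
    (hp : p =ᵐ[μ] μ[C.indicator (fun _ => (1:ℝ))|m])
    (hpε : ∀ᵐ ω ∂μ, ε ≤ p ω)
    {S : Set Ω} (hS : MeasurableSet[m] S) (hS0 : μ (S ∩ C) = 0) : μ S = 0 := by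
  have := did_aux_meas_le hm hC hε hp hpε hS
  rw [hS0, mul_zero] at this
  exact le_antisymm this bot_le

lemma did_aux_ae (hm : m ≤ inst) (hC : MeasurableSet[inst] C) (hε : 0 < ε)
    (hp : p =ᵐ[μ] μ[C.indicator (fun _ => (1:ℝ))|m])
    (hpε : ∀ᵐ ω ∂μ, ε ≤ p ω)
    {f g : Ω → ℝ} (hf : Measurable[m] f) (hg : Measurable[m] g)
    (hfg : f =ᵐ[μ.restrict C] g) : f =ᵐ[μ] g := by
  have hS : MeasurableSet[m] {ω | ¬ f ω = g ω} := by
    have h := (hf.sub hg) (measurableSet_singleton (0:ℝ)).compl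
    convert h using 1
    ext ω
    simp [sub_eq_zero]
  have h0 : μ.restrict C {ω | ¬ f ω = g ω} = 0 := ae_iff.1 hfg
  rw [Measure.restrict_apply (hm _ hS)] at h0
  exact ae_iff.2 (did_aux_null hm hC hε hp hpε hS h0)

lemma did_aux_integrable (hm : m ≤ inst) (hC : MeasurableSet[inst] C) (hε : 0 < ε)
    (hp : p =ᵐ[μ] μ[C.indicator (fun _ => (1:ℝ))|m])
    (hpε : ∀ᵐ ω ∂μ, ε ≤ p ω)
    {g : Ω → ℝ} (hg : StronglyMeasurable[m] g)
    (hgi : IntegrableOn g C μ) : Integrable g μ := by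
  refine ⟨(hg.mono hm).aestronglyMeasurable, ?_⟩
  have hmeas : Measurable[m] (fun a => (‖g a‖₊ : ℝ≥0∞)) := hg.enorm
  have hfin : ∫⁻ a, ‖g a‖₊ ∂(μ.restrict C) < ⊤ := hgi.2
  calc ∫⁻ a, ‖g a‖₊ ∂μ = ∫⁻ a, ‖g a‖₊ ∂(μ.trim hm) := (lintegral_trim hm hmeas).symm
    _ ≤ ∫⁻ a, ‖g a‖₊ ∂(ENNReal.ofReal ε⁻¹ • ((μ.restrict C).trim hm)) :=
        lintegral_mono' (did_aux_trim_le hm hC hε hp hpε) le_rfl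
    _ = ENNReal.ofReal ε⁻¹ * ∫⁻ a, ‖g a‖₊ ∂((μ.restrict C).trim hm) :=
        lintegral_smul_measure _ _
    _ = ENNReal.ofReal ε⁻¹ * ∫⁻ a, ‖g a‖₊ ∂(μ.restrict C) := by rw [lintegral_trim hm hmeas]
    _ < ⊤ := ENNReal.mul_lt_top ENNReal.ofReal_lt_top hfin

end Aux

/-- Identification of the intervention-specific mean by the
iterated-regression functional `ψ_t` under longitudinal difference-in-differences
assumptions. Under the core setup with horizon `t`, let `Y s` (observed outcomes) and
`Ystar s` (potential outcomes under the target regime) be integrable for `s ≤ t`, with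
`Ystar s = Y s` a.s. on `B s` (treatment-consistency/no-anticipation; `P (B 0) = 1`
gives `Ystar 0 = Y 0` a.s.). Assume parallel trends: for every `1 ≤ m ≤ k ≤ t` there is
a `𝒲 m`-measurable `h` that is a version of `E[Ystar k - Ystar (k-1) | 𝒲 m]` both
under `P[|B (m-1)]` and under `P[|B m]`. Then for any choice of versions `Q j k m` in
the iterated conditional-expectation recursions built from the observed outcomes,
`E_P[Ystar t] = E_P[Y 0] + Σ_{k=1}^t (φ_{k,k} - φ_{k-1,k}) = ψ_t`,
with `φ_{j,k} = E_P[Q j k 1]`; in particular the value does not depend on the chosen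
versions. -/
theorem intervention_specific_mean_identification
    {Ω : Type*} [inst : MeasurableSpace Ω] (P : Measure Ω) [IsProbabilityMeasure P]
    (t : ℕ) (ht : 1 ≤ t)
    (B : ℕ → Set Ω)
    (hBmeas : ∀ m, m ≤ t → MeasurableSet (B m))
    (hBmono : ∀ m, m < t → B (m + 1) ⊆ B m)
    (hB0 : P (B 0) = 1)
    (hBt : 0 < P (B t))
    (𝒲 : ℕ → MeasurableSpace Ω)
    (h𝒲le : ∀ m, 1 ≤ m → m ≤ t → 𝒲 m ≤ inst)
    (h𝒲mono : ∀ m, 1 ≤ m → m < t → 𝒲 m ≤ 𝒲 (m + 1))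
    (ε : ℝ) (hε : 0 < ε)
    (p : ℕ → Ω → ℝ)
    (hpmeas : ∀ m, 1 ≤ m → m ≤ t → Measurable[𝒲 m] (p m))
    (hpver : ∀ m, 1 ≤ m → m ≤ t →
      p m =ᵐ[P[|B (m - 1)]] (P[|B (m - 1)])[(B m).indicator (fun _ => (1 : ℝ))|𝒲 m])
    (hppos : ∀ m, 1 ≤ m → m ≤ t → ∀ᵐ ω ∂P, ε ≤ p m ω)
    (Y Ystar : ℕ → Ω → ℝ)
    (hYint : ∀ s, s ≤ t → Integrable (Y s) P)
    (hYstarint : ∀ s, s ≤ t → Integrable (Ystar s) P)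
    (hcons : ∀ s, s ≤ t → ∀ᵐ ω ∂P, ω ∈ B s → Ystar s ω = Y s ω)
    (hPT : ∀ k m, 1 ≤ m → m ≤ k → k ≤ t → ∃ h : Ω → ℝ, Measurable[𝒲 m] h ∧
      h =ᵐ[P[|B (m - 1)]] (P[|B (m - 1)])[fun ω => Ystar k ω - Ystar (k - 1) ω|𝒲 m] ∧
      h =ᵐ[P[|B m]] (P[|B m])[fun ω => Ystar k ω - Ystar (k - 1) ω|𝒲 m])
    (Q : ℕ → ℕ → ℕ → Ω → ℝ)
    (hQtop : ∀ k, 1 ≤ k → k ≤ t → ∀ j, (j = k - 1 ∨ j = k) → Q j k (k + 1) = Y j)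
    (hQmeas : ∀ k, 1 ≤ k → k ≤ t → ∀ j, (j = k - 1 ∨ j = k) →
      ∀ m, 1 ≤ m → m ≤ k → Measurable[𝒲 m] (Q j k m))
    (hQver : ∀ k, 1 ≤ k → k ≤ t → ∀ j, (j = k - 1 ∨ j = k) →
      ∀ m, 1 ≤ m → m ≤ k → Q j k m =ᵐ[P[|B m]] (P[|B m])[Q j k (m + 1)|𝒲 m])
    :
    ∫ ω, Ystar t ω ∂P
      = (∫ ω, Y 0 ω ∂P)
        + ∑ k ∈ Finset.Icc 1 t, ((∫ ω, Q k k 1 ω ∂P) - ∫ ω, Q (k - 1) k 1 ω ∂P) := by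
  classical
  -- monotonicity of the events
  have hBsub : ∀ a b : ℕ, a ≤ b → b ≤ t → B b ⊆ B a := by
    intro a b hab hbt
    induction b with
    | zero =>
      have : a = 0 := by omega
      subst this; exact subset_rfl
    | succ n ih =>
      rcases eq_or_lt_of_le hab with h | h
      · rw [h]
      · exact (hBmono n (by omega)).trans (ih (by omega) (by omega))
  have hPB : ∀ m, m ≤ t → P (B m) ≠ 0 :=
    fun m hm => (lt_of_lt_of_le hBt (measure_mono (hBsub m t hm le_rfl))).ne'
  have hPBtop : ∀ m : ℕ, P (B m) ≠ ⊤ := fun m => measure_ne_top P _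
  have hprob : ∀ m, m ≤ t → IsProbabilityMeasure (P[|B m]) :=
    fun m hm => cond_isProbabilityMeasure (hPB m hm)
  have hB0c : P (B 0)ᶜ = 0 := by
    rw [measure_compl (hBmeas 0 (Nat.zero_le t)) (measure_ne_top P _), hB0, measure_univ,
      tsub_self]
  have hcond0 : P[|B 0] = P := by
    apply Measure.ext; intro s hs
    rw [cond_apply (hBmeas 0 (Nat.zero_le t)) P s, hB0, inv_one, one_mul]
    apply le_antisymm (measure_mono Set.inter_subset_right)
    calc P s ≤ P ((B 0 ∩ s) ∪ (B 0)ᶜ) := by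
          apply measure_mono; intro x hx
          by_cases hb : x ∈ B 0
          · exact Or.inl ⟨hb, hx⟩
          · exact Or.inr hb
      _ ≤ P (B 0 ∩ s) + P (B 0)ᶜ := measure_union_le _ _
      _ = P (B 0 ∩ s) := by rw [hB0c, add_zero]
  have hB0ae : ∀ᵐ ω ∂P, ω ∈ B 0 := by
    rw [ae_iff]; exact hB0c
  -- a.e. transfer from P[|B m] to P[|B (m-1)]
  have key_ae : ∀ m, 1 ≤ m → m ≤ t → ∀ f g : Ω → ℝ, Measurable[𝒲 m] f → Measurable[𝒲 m] g →
      f =ᵐ[P[|B m]] g → f =ᵐ[P[|B (m - 1)]] g := by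
    intro m hm1 hmt f g hf hg hfg
    haveI := hprob (m - 1) (by omega)
    have h1 : f =ᵐ[P.restrict (B m)] g := by
      rw [ProbabilityTheory.cond] at hfg
      exact (Measure.ae_ennreal_smul_measure_iff (ENNReal.inv_ne_zero.2 (hPBtop m))).1 hfg
    have h2 : f =ᵐ[(P[|B (m - 1)]).restrict (B m)] g := by
      rw [ProbabilityTheory.cond, Measure.restrict_smul, Measure.restrict_restrict (hBmeas m hmt),
        Set.inter_eq_left.2 (hBsub (m - 1) m (by omega) hmt)]
      exact (Measure.ae_ennreal_smul_measure_iff (ENNReal.inv_ne_zero.2 (hPBtop (m - 1)))).2 h1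
    exact did_aux_ae (h𝒲le m hm1 hmt) (hBmeas m hmt) hε (hpver m hm1 hmt)
      ((cond_absolutelyContinuous (μ := P) (s := B (m - 1))).ae_le (hppos m hm1 hmt)) hf hg h2
  -- integrability transfer from P[|B m] to P[|B (m-1)]
  have key_int : ∀ m, 1 ≤ m → m ≤ t → ∀ g : Ω → ℝ, StronglyMeasurable[𝒲 m] g →
      Integrable g (P[|B m]) → Integrable g (P[|B (m - 1)]) := by
    intro m hm1 hmt g hg hgi
    haveI := hprob (m - 1) (by omega)
    have h1 : Integrable g (P.restrict (B m)) := by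
      rw [ProbabilityTheory.cond] at hgi
      exact (integrable_smul_measure (ENNReal.inv_ne_zero.2 (hPBtop m))
        (ENNReal.inv_ne_top.2 (hPB m hmt))).1 hgi
    have h2 : IntegrableOn g (B m) (P[|B (m - 1)]) := by
      rw [IntegrableOn, ProbabilityTheory.cond, Measure.restrict_smul,
        Measure.restrict_restrict (hBmeas m hmt),
        Set.inter_eq_left.2 (hBsub (m - 1) m (by omega) hmt)]
      exact (integrable_smul_measure (ENNReal.inv_ne_zero.2 (hPBtop (m - 1)))
        (ENNReal.inv_ne_top.2 (hPB (m - 1) (by omega)))).2 h1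
    exact did_aux_integrable (h𝒲le m hm1 hmt) (hBmeas m hmt) hε (hpver m hm1 hmt)
      ((cond_absolutelyContinuous (μ := P) (s := B (m - 1))).ae_le (hppos m hm1 hmt)) hg h2
  -- integrability passes to conditional measures
  have hcondInt : ∀ (f : Ω → ℝ) (m' : ℕ), m' ≤ t → Integrable f P → Integrable f (P[|B m']) := by
    intro f m' hm' hf
    rw [ProbabilityTheory.cond]
    exact (hf.restrict).smul_measure (ENNReal.inv_ne_top.2 (hPB m' hm'))
  -- integrability of the iterated regressions
  have hQint : ∀ k, 1 ≤ k → k ≤ t → ∀ j, (j = k - 1 ∨ j = k) → ∀ m, 1 ≤ m → m ≤ k →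
      Integrable (Q j k m) (P[|B (m - 1)]) := by
    intro k hk1 hkt j hj m hm1 hmk
    haveI := hprob m (hmk.trans hkt)
    have hgm : StronglyMeasurable[𝒲 m] ((P[|B m])[Q j k (m + 1)|𝒲 m]) :=
      stronglyMeasurable_condExp
    have h1 : Q j k m =ᵐ[P[|B (m - 1)]] (P[|B m])[Q j k (m + 1)|𝒲 m] :=
      key_ae m hm1 (hmk.trans hkt) _ _ (hQmeas k hk1 hkt j hj m hm1 hmk) hgm.measurable
        (hQver k hk1 hkt j hj m hm1 hmk)
    have h2 : Integrable ((P[|B m])[Q j k (m + 1)|𝒲 m]) (P[|B (m - 1)]) :=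
      key_int m hm1 (hmk.trans hkt) _ hgm integrable_condExp
    exact h2.congr h1.symm
  -- a.e. membership under the conditional measure
  have hmemB : ∀ m, m ≤ t → ∀ᵐ ω ∂(P[|B m]), ω ∈ B m := by
    intro m hmt
    have : (P[|B m]) (B m)ᶜ = 0 := by
      rw [cond_apply (hBmeas m hmt) P, Set.inter_compl_self, measure_empty, mul_zero]
    rw [ae_iff]; exact this
  -- consistency under conditional measures
  have hconsC : ∀ k s : ℕ, k ≤ t → s ≤ t → B k ⊆ B s → Ystar s =ᵐ[P[|B k]] Y s := by
    intro k s hkt hst hsub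
    have h1 := (cond_absolutelyContinuous (μ := P) (s := B k)).ae_le (hcons s hst)
    filter_upwards [h1, hmemB k hkt] with ω h hω using h (hsub hω)
  -- the main downward induction
  have claim : ∀ k, 1 ≤ k → k ≤ t → ∀ i m, 1 ≤ m → m ≤ k → k - m = i →
      ∃ h : Ω → ℝ, Measurable[𝒲 m] h ∧
        h =ᵐ[P[|B (m - 1)]] (P[|B (m - 1)])[fun ω => Ystar k ω - Ystar (k - 1) ω|𝒲 m] ∧
        (fun ω => Q k k m ω - Q (k - 1) k m ω) =ᵐ[P[|B (m - 1)]] h := by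
    intro k hk1 hkt i
    induction i with
    | zero =>
      intro m hm1 hmk hi
      obtain rfl : m = k := by omega
      obtain ⟨h, hhm, hh1, hh2⟩ := hPT m m hm1 le_rfl hkt
      haveI := hprob m hkt
      have e1 := hQver m hm1 hkt m (Or.inr rfl) m hm1 le_rfl
      have e2 := hQver m hm1 hkt (m - 1) (Or.inl rfl) m hm1 le_rfl
      rw [hQtop m hm1 hkt m (Or.inr rfl)] at e1
      rw [hQtop m hm1 hkt (m - 1) (Or.inl rfl)] at e2
      have iY1 : Integrable (Y m) (P[|B m]) := hcondInt _ m hkt (hYint m hkt)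
      have iY2 : Integrable (Y (m - 1)) (P[|B m]) := hcondInt _ m hkt (hYint (m - 1) (by omega))
      have hYs1 : Ystar m =ᵐ[P[|B m]] Y m := hconsC m m hkt hkt subset_rfl
      have hYs2 : Ystar (m - 1) =ᵐ[P[|B m]] Y (m - 1) :=
        hconsC m (m - 1) hkt (by omega) (hBsub (m - 1) m (by omega) hkt)
      have hsubst : (fun ω => Y m ω - Y (m - 1) ω) =ᵐ[P[|B m]]
          (fun ω => Ystar m ω - Ystar (m - 1) ω) := (hYs1.symm).sub (hYs2.symm)
      have hD : (fun ω => Q m m m ω - Q (m - 1) m m ω) =ᵐ[P[|B m]] h := by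
        have step1 : (fun ω => Q m m m ω - Q (m - 1) m m ω) =ᵐ[P[|B m]]
            (fun ω => ((P[|B m])[Y m|𝒲 m]) ω - ((P[|B m])[Y (m - 1)|𝒲 m]) ω) := e1.sub e2
        have step2 : (P[|B m])[fun ω => Y m ω - Y (m - 1) ω|𝒲 m] =ᵐ[P[|B m]]
            (fun ω => ((P[|B m])[Y m|𝒲 m]) ω - ((P[|B m])[Y (m - 1)|𝒲 m]) ω) :=
          condExp_sub iY1 iY2 _
        have step3 : (P[|B m])[fun ω => Y m ω - Y (m - 1) ω|𝒲 m] =ᵐ[P[|B m]]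
            (P[|B m])[fun ω => Ystar m ω - Ystar (m - 1) ω|𝒲 m] :=
          condExp_congr_ae hsubst
        exact step1.trans (step2.symm.trans (step3.trans hh2.symm))
      exact ⟨h, hhm, hh1, key_ae m hm1 hkt _ h
        ((hQmeas m hm1 hkt m (Or.inr rfl) m hm1 le_rfl).sub
          (hQmeas m hm1 hkt (m - 1) (Or.inl rfl) m hm1 le_rfl)) hhm hD⟩
    | succ i ih =>
      intro m hm1 hmk hi
      have hmlt : m < k := by omega
      have hm1t : m + 1 ≤ t := by omega
      haveI := hprob m (by omega)
      obtain ⟨h', hh'm, hh'1, hh'2⟩ := ih (m + 1) (by omega) (by omega) (by omega)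
      rw [Nat.add_sub_cancel] at hh'1 hh'2
      obtain ⟨h, hhm, hh1, hh2⟩ := hPT k m hm1 (by omega) hkt
      have e1 := hQver k hk1 hkt k (Or.inr rfl) m hm1 (by omega)
      have e2 := hQver k hk1 hkt (k - 1) (Or.inl rfl) m hm1 (by omega)
      have i1 : Integrable (Q k k (m + 1)) (P[|B m]) := by
        have := hQint k hk1 hkt k (Or.inr rfl) (m + 1) (by omega) (by omega)
        rwa [Nat.add_sub_cancel] at this
      have i2 : Integrable (Q (k - 1) k (m + 1)) (P[|B m]) := by
        have := hQint k hk1 hkt (k - 1) (Or.inl rfl) (m + 1) (by omega) (by omega)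
        rwa [Nat.add_sub_cancel] at this
      have hD : (fun ω => Q k k m ω - Q (k - 1) k m ω) =ᵐ[P[|B m]] h := by
        have step1 : (fun ω => Q k k m ω - Q (k - 1) k m ω) =ᵐ[P[|B m]]
            (fun ω => ((P[|B m])[Q k k (m + 1)|𝒲 m]) ω - ((P[|B m])[Q (k - 1) k (m + 1)|𝒲 m]) ω) :=
          e1.sub e2
        have step2 : (P[|B m])[fun ω => Q k k (m + 1) ω - Q (k - 1) k (m + 1) ω|𝒲 m] =ᵐ[P[|B m]]
            (fun ω => ((P[|B m])[Q k k (m + 1)|𝒲 m]) ω - ((P[|B m])[Q (k - 1) k (m + 1)|𝒲 m]) ω) :=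
          condExp_sub i1 i2 _
        have step3 : (P[|B m])[fun ω => Q k k (m + 1) ω - Q (k - 1) k (m + 1) ω|𝒲 m] =ᵐ[P[|B m]]
            (P[|B m])[h'|𝒲 m] := condExp_congr_ae hh'2
        have step4 : (P[|B m])[h'|𝒲 m] =ᵐ[P[|B m]]
            (P[|B m])[(P[|B m])[fun ω => Ystar k ω - Ystar (k - 1) ω|𝒲 (m + 1)]|𝒲 m] :=
          condExp_congr_ae hh'1
        have step5 : (P[|B m])[(P[|B m])[fun ω => Ystar k ω - Ystar (k - 1) ω|𝒲 (m + 1)]|𝒲 m]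
            =ᵐ[P[|B m]] (P[|B m])[fun ω => Ystar k ω - Ystar (k - 1) ω|𝒲 m] :=
          condExp_condExp_of_le (h𝒲mono m hm1 (by omega)) (h𝒲le (m + 1) (by omega) hm1t)
        exact step1.trans (step2.symm.trans (step3.trans (step4.trans (step5.trans hh2.symm))))
      exact ⟨h, hhm, hh1, key_ae m hm1 (by omega) _ h
        ((hQmeas k hk1 hkt k (Or.inr rfl) m hm1 (by omega)).sub
          (hQmeas k hk1 hkt (k - 1) (Or.inl rfl) m hm1 (by omega))) hhm hD⟩
  -- per-k identification
  have key : ∀ k, 1 ≤ k → k ≤ t →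
      (∫ ω, Q k k 1 ω ∂P) - (∫ ω, Q (k - 1) k 1 ω ∂P)
        = (∫ ω, Ystar k ω ∂P) - ∫ ω, Ystar (k - 1) ω ∂P := by
    intro k hk1 hkt
    obtain ⟨h, hhm, hh1, hh2⟩ := claim k hk1 hkt (k - 1) 1 le_rfl hk1 rfl
    have h10 : (1 : ℕ) - 1 = 0 := rfl
    rw [h10, hcond0] at hh1 hh2
    have i1 : Integrable (Q k k 1) P := by
      have := hQint k hk1 hkt k (Or.inr rfl) 1 le_rfl hk1
      rwa [h10, hcond0] at this
    have i2 : Integrable (Q (k - 1) k 1) P := by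
      have := hQint k hk1 hkt (k - 1) (Or.inl rfl) 1 le_rfl hk1
      rwa [h10, hcond0] at this
    calc (∫ ω, Q k k 1 ω ∂P) - (∫ ω, Q (k - 1) k 1 ω ∂P)
        = ∫ ω, (Q k k 1 ω - Q (k - 1) k 1 ω) ∂P := (integral_sub i1 i2).symm
      _ = ∫ ω, h ω ∂P := integral_congr_ae hh2
      _ = ∫ ω, (P[fun ω => Ystar k ω - Ystar (k - 1) ω|𝒲 1]) ω ∂P := integral_congr_ae hh1
      _ = ∫ ω, (Ystar k ω - Ystar (k - 1) ω) ∂P := integral_condExp (h𝒲le 1 le_rfl ht)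
      _ = (∫ ω, Ystar k ω ∂P) - ∫ ω, Ystar (k - 1) ω ∂P :=
          integral_sub (hYstarint k hkt) (hYstarint (k - 1) (by omega))
  -- consistency at time 0
  have hY0 : ∫ ω, Ystar 0 ω ∂P = ∫ ω, Y 0 ω ∂P := by
    apply integral_congr_ae
    filter_upwards [hcons 0 (by omega), hB0ae] with ω h hω using h hω
  -- final assembly
  have hsum : ∑ k ∈ Finset.Icc 1 t, ((∫ ω, Q k k 1 ω ∂P) - ∫ ω, Q (k - 1) k 1 ω ∂P)
      = ∑ k ∈ Finset.Icc 1 t, ((∫ ω, Ystar k ω ∂P) - ∫ ω, Ystar (k - 1) ω ∂P) := by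
    refine Finset.sum_congr rfl fun k hk => ?_
    rw [Finset.mem_Icc] at hk
    exact key k hk.1 hk.2
  have htele : ∑ k ∈ Finset.Icc 1 t, ((∫ ω, Ystar k ω ∂P) - ∫ ω, Ystar (k - 1) ω ∂P)
      = (∫ ω, Ystar t ω ∂P) - ∫ ω, Ystar 0 ω ∂P := by
    have hIcc : Finset.Icc 1 t = Finset.Ico 1 (t + 1) := by ext x; simp only [Finset.mem_Icc, Finset.mem_Ico]; omega
    rw [hIcc, Finset.sum_Ico_eq_sum_range]
    have hidx : ∀ i : ℕ, (∫ ω, Ystar (1 + i) ω ∂P) - ∫ ω, Ystar (1 + i - 1) ω ∂P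
        = (∫ ω, Ystar (i + 1) ω ∂P) - ∫ ω, Ystar i ω ∂P := by
      intro i
      have h1 : 1 + i = i + 1 := by omega
      have h2 : 1 + i - 1 = i := by omega
      rw [h2, h1]
    rw [Finset.sum_congr rfl fun i _ => hidx i]
    have h3 : t + 1 - 1 = t := by omega
    rw [h3, Finset.sum_range_sub (fun i => ∫ ω, Ystar i ω ∂P) t]
  rw [hsum, htele, hY0]
  ring
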